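/- Let s = (s_k) ⊆ [0,1] with ∑ s_k = ∞ and let (a_k) be a sequence of positive reals. Then the following are equivalent: (i) for every D ⊆ ℕ with ∑_{k ∈ D} s_k = ∞ one has ∑_{k ∈ D} a_k^{-1} = ∞; (ii) there exists A ⊆ ℕ with ∑_{k ∉ A} s_k < ∞ and sup_{n ∈ A} a_n s_n < ∞. -/
import Mathlib


private lemma trim_lemma (s : ℕ → ℝ) (hs1 : ∀ k, s k ≤ 1) :
    ∀ F : Finset ℕ, 1 ≤ ∑ n ∈ F, s n →
      ∃ F' : Finset ℕ, F' ⊆ F ∧ 1 ≤ ∑ n ∈ F', s n ∧ ∑ n ∈ F', s n ≤ 2 := by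
  intro F
  induction F using Finset.strongInduction with
  | _ F ih =>
    intro h1
    by_cases h2 : ∑ n ∈ F, s n ≤ 2
    · exact ⟨F, subset_rfl, h1, h2⟩
    · have hne : F.Nonempty := by
        rcases F.eq_empty_or_nonempty with h | h
        · rw [h] at h1; simp at h1; linarith
        · exact h
      obtain ⟨x, hx⟩ := hne
      have hsum : ∑ n ∈ F.erase x, s n = ∑ n ∈ F, s n - s x := by
        rw [Finset.sum_erase_eq_sub hx]
      have h1' : 1 ≤ ∑ n ∈ F.erase x, s n := by
        have := hs1 x; rw [hsum]; linarith
      obtain ⟨F', hF', h', h''⟩ := ih (F.erase x) (Finset.erase_ssubset hx) h1'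
      exact ⟨F', hF'.trans (Finset.erase_subset x F), h', h''⟩

private lemma extract_lemma (s : ℕ → ℝ) (hs0 : ∀ k, 0 ≤ s k) (hs1 : ∀ k, s k ≤ 1)
    (E : Set ℕ) (hE : ¬ Summable (Set.indicator E s)) (G : Finset ℕ) :
    ∃ F : Finset ℕ, ↑F ⊆ E ∧ Disjoint F G ∧ 1 ≤ ∑ n ∈ F, s n ∧ ∑ n ∈ F, s n ≤ 2 := by
  classical
  set f := Set.indicator (E \ ↑G) s with hf
  have hf0 : ∀ n, 0 ≤ f n := fun n => Set.indicator_nonneg (fun k _ => hs0 k) n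
  have hfE : ¬ Summable f := by
    intro hsum
    apply hE
    have heq : Set.indicator E s = f + Set.indicator (E ∩ ↑G) s := by
      funext n
      by_cases hnE : n ∈ E <;> by_cases hnG : n ∈ (↑G : Set ℕ) <;>
        simp [hf, Set.indicator, hnE, hnG]
    rw [heq]
    exact hsum.add (summable_of_ne_finset_zero (s := G)
      (fun n hn => Set.indicator_of_notMem (fun h => hn h.2) _))
  have htend := (not_summable_iff_tendsto_nat_atTop_of_nonneg hf0).mp hfE
  obtain ⟨n, hn⟩ := (htend.eventually_ge_atTop 1).exists
  set F0 := (Finset.range n).filter (fun i => i ∈ E \ ↑G) with hF0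
  have hsumeq : ∑ i ∈ F0, s i = ∑ i ∈ Finset.range n, f i := by
    rw [hF0, Finset.sum_filter]
    refine Finset.sum_congr rfl fun i _ => ?_
    by_cases h : i ∈ E \ ↑G <;> simp [hf, Set.indicator, h]
  obtain ⟨F, hFsub, h1, h2⟩ := trim_lemma s hs1 F0 (by rw [hsumeq]; exact hn)
  have hmem : ∀ x ∈ F, x ∈ E ∧ x ∉ G := by
    intro x hx
    have h := hFsub hx
    rw [hF0, Finset.mem_filter] at h
    exact ⟨h.2.1, fun hc => h.2.2 hc⟩
  refine ⟨F, fun x hx => (hmem x hx).1, ?_, h1, h2⟩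
  rw [Finset.disjoint_left]
  exact fun x hx hxG => (hmem x hx).2 hxG


/-- Characterisation of `(𝔉ˢ,1)`-admissibility: `∑_{k∈D} a_k⁻¹ = ∞` for every
`D` with `∑_{k∈D} s_k = ∞` iff `(aₙ sₙ)` is bounded along some `A` with
summable complement. -/
theorem stmt_7 (s : ℕ → ℝ) (hs : ∀ k, s k ∈ Set.Icc (0 : ℝ) 1)
    (hdiv : ¬ Summable s) (a : ℕ → ℝ) (ha : ∀ k, 0 < a k) :
    (∀ D : Set ℕ, ¬ Summable (Set.indicator D s) →
        ¬ Summable (Set.indicator D (fun k => (a k)⁻¹))) ↔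
      (∃ A : Set ℕ, Summable (Set.indicator Aᶜ s) ∧
        ∃ M : ℝ, ∀ n ∈ A, a n * s n ≤ M) := by
  constructor
  · intro h
    by_contra hnot
    classical
    push_neg at hnot
    have hs0 : ∀ k, 0 ≤ s k := fun k => (hs k).1
    have hs1 : ∀ k, s k ≤ 1 := fun k => (hs k).2
    set E : ℕ → Set ℕ := fun j => {n | (4:ℝ)^j < a n * s n} with hEdef
    have hEdiv : ∀ j, ¬ Summable (Set.indicator (E j) s) := by
      intro j hj
      obtain ⟨n, hn, hgt⟩ := hnot (E j)ᶜ (by rwa [compl_compl]) ((4:ℝ)^j)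
      exact hn hgt
    have key : ∀ j (G : Finset ℕ), ∃ F : Finset ℕ,
        ↑F ⊆ E j ∧ Disjoint F G ∧ 1 ≤ ∑ n ∈ F, s n ∧ ∑ n ∈ F, s n ≤ 2 :=
      fun j G => extract_lemma s hs0 hs1 (E j) (hEdiv j) G
    let pick : ℕ → Finset ℕ → Finset ℕ := fun j G => (key j G).choose
    let g : ℕ → Finset ℕ := fun j => Nat.rec ∅ (fun i Gi => Gi ∪ pick i Gi) j
    let F : ℕ → Finset ℕ := fun j => pick j (g j)
    have hF : ∀ j, ↑(F j) ⊆ E j ∧ Disjoint (F j) (g j) ∧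
        1 ≤ ∑ n ∈ F j, s n ∧ ∑ n ∈ F j, s n ≤ 2 := fun j => (key j (g j)).choose_spec
    have hg : ∀ j, g (j+1) = g j ∪ F j := fun j => rfl
    have hgmono : Monotone g := monotone_nat_of_le_succ (fun j => by
      rw [hg]; exact Finset.subset_union_left)
    have hFg : ∀ i j, i < j → F i ⊆ g j := fun i j hij =>
      (show F i ⊆ g (i+1) by rw [hg]; exact Finset.subset_union_right).trans (hgmono hij)
    have hdisj : ∀ i j, i < j → Disjoint (F j) (F i) := fun i j hij =>
      (hF j).2.1.mono_right (hFg i j hij)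
    have hpair : ∀ N : Finset ℕ, Set.PairwiseDisjoint (↑N) F := by
      intro N i _ j _ hij
      rcases lt_or_gt_of_ne hij with hlt | hlt
      · exact (hdisj i j hlt).symm
      · exact hdisj j i hlt
    have hgb : ∀ N, g N = (Finset.range N).biUnion F := by
      intro N
      induction N with
      | zero => rfl
      | succ N ih =>
        rw [hg, ih, Finset.range_add_one, Finset.biUnion_insert, Finset.union_comm]
    set D : Set ℕ := ⋃ j, ↑(F j) with hDdef
    -- s diverges on D
    have hDs : ¬ Summable (Set.indicator D s) := by
      intro hc
      obtain ⟨N, hN⟩ := exists_nat_gt (∑' n, Set.indicator D s n)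
      have hb : ∑ n ∈ g N, Set.indicator D s n ≤ ∑' n, Set.indicator D s n :=
        Summable.sum_le_tsum _ (fun n _ => Set.indicator_nonneg (fun k _ => hs0 k) n) hc
      have hlow : (N:ℝ) ≤ ∑ n ∈ g N, Set.indicator D s n := by
        rw [hgb N, Finset.sum_biUnion (hpair (Finset.range N))]
        have hone : ∀ j ∈ Finset.range N, (1:ℝ) ≤ ∑ n ∈ F j, Set.indicator D s n := by
          intro j _
          have heq : ∑ n ∈ F j, Set.indicator D s n = ∑ n ∈ F j, s n :=
            Finset.sum_congr rfl (fun n hn =>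
              Set.indicator_of_mem (Set.mem_iUnion.2 ⟨j, hn⟩) s)
          rw [heq]; exact (hF j).2.2.1
        calc (N:ℝ) = ∑ _j ∈ Finset.range N, (1:ℝ) := by simp
          _ ≤ _ := Finset.sum_le_sum hone
      linarith
    -- a⁻¹ summable on D
    have hDa : Summable (Set.indicator D (fun k => (a k)⁻¹)) := by
      apply summable_of_sum_le (c := 4)
      · intro n
        exact Set.indicator_nonneg (fun k _ => (inv_pos.mpr (ha k)).le) n
      · intro T
        set T' := T.filter (· ∈ D) with hT'
        have h1 : ∑ n ∈ T, Set.indicator D (fun k => (a k)⁻¹) n = ∑ n ∈ T', (a n)⁻¹ := by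
          rw [hT', Finset.sum_filter]
          exact Finset.sum_congr rfl (fun n _ => by rw [Set.indicator_apply])
        let jn : ℕ → ℕ := fun n => if h : ∃ j, n ∈ F j then h.choose else 0
        set K := (T'.sup jn) + 1 with hK
        have hsubset : T' ⊆ (Finset.range K).biUnion F := by
          intro x hx
          have hxD : x ∈ D := by
            have := Finset.mem_filter.mp hx
            simpa using this.2
          obtain ⟨j, hj⟩ := Set.mem_iUnion.mp hxD
          have hex : ∃ j, x ∈ F j := ⟨j, hj⟩
          have hxF : x ∈ F (jn x) := by
            simp only [jn, dif_pos hex]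
            exact hex.choose_spec
          refine Finset.mem_biUnion.mpr ⟨jn x, ?_, hxF⟩
          rw [Finset.mem_range, hK]
          exact Nat.lt_succ_of_le (Finset.le_sup hx)
        have hbound : ∀ j ∈ Finset.range K, ∑ n ∈ F j, (a n)⁻¹ ≤ 2 * (1/2:ℝ)^j := by
          intro j _
          have hstep : ∀ n ∈ F j, (a n)⁻¹ ≤ ((4:ℝ)^j)⁻¹ * s n := by
            intro n hn
            have hEn : (4:ℝ)^j < a n * s n := (hF j).1 hn
            have h4 : (0:ℝ) < (4:ℝ)^j := pow_pos (by norm_num) j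
            have ht : (0:ℝ) < (a n)⁻¹ := inv_pos.mpr (ha n)
            have h5 : (a n)⁻¹ * (4:ℝ)^j < s n := by
              calc (a n)⁻¹ * (4:ℝ)^j < (a n)⁻¹ * (a n * s n) :=
                    mul_lt_mul_of_pos_left hEn ht
                _ = s n := by rw [← mul_assoc, inv_mul_cancel₀ (ne_of_gt (ha n)), one_mul]
            rw [inv_mul_eq_div, le_div_iff₀ h4]
            linarith
          calc ∑ n ∈ F j, (a n)⁻¹ ≤ ∑ n ∈ F j, ((4:ℝ)^j)⁻¹ * s n :=
                Finset.sum_le_sum hstep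
            _ = ((4:ℝ)^j)⁻¹ * ∑ n ∈ F j, s n := by rw [Finset.mul_sum]
            _ ≤ ((4:ℝ)^j)⁻¹ * 2 := by
                have h4 : (0:ℝ) < (4:ℝ)^j := pow_pos (by norm_num) j
                exact mul_le_mul_of_nonneg_left (hF j).2.2.2 (inv_pos.mpr h4).le
            _ ≤ 2 * (1/2:ℝ)^j := by
                rw [mul_comm]
                have : ((4:ℝ)^j)⁻¹ ≤ (1/2:ℝ)^j := by
                  rw [← inv_pow, ← one_div]
                  exact pow_le_pow_left₀ (by norm_num) (by norm_num) j
                linarith [this]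
        calc ∑ n ∈ T, Set.indicator D (fun k => (a k)⁻¹) n = ∑ n ∈ T', (a n)⁻¹ := h1
          _ ≤ ∑ n ∈ (Finset.range K).biUnion F, (a n)⁻¹ :=
              Finset.sum_le_sum_of_subset_of_nonneg hsubset
                (fun n _ _ => (inv_pos.mpr (ha n)).le)
          _ = ∑ j ∈ Finset.range K, ∑ n ∈ F j, (a n)⁻¹ :=
              Finset.sum_biUnion (hpair (Finset.range K))
          _ ≤ ∑ j ∈ Finset.range K, 2 * (1/2:ℝ)^j := Finset.sum_le_sum hbound
          _ = 2 * ∑ j ∈ Finset.range K, (1/2:ℝ)^j := by rw [Finset.mul_sum]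
          _ ≤ 2 * 2 := by
              have := sum_geometric_two_le K
              linarith
          _ = 4 := by norm_num
    exact h D hDs hDa
  · rintro ⟨A, hAc, M, hM⟩ D hD hsum
    classical
    set M' := max M 1 with hM'
    have hM'pos : (0:ℝ) < M' := lt_of_lt_of_le one_pos (le_max_right _ _)
    have key : ∀ n, Set.indicator D s n ≤
        Set.indicator (D ∩ Aᶜ) s n + M' * Set.indicator D (fun k => (a k)⁻¹) n := by
      intro n
      by_cases hnD : n ∈ D
      · by_cases hnA : n ∈ A
        · rw [Set.indicator_of_mem hnD, Set.indicator_of_notMem (fun h => h.2 hnA),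
            Set.indicator_of_mem hnD]
          have h1 : a n * s n ≤ M' := (hM n hnA).trans (le_max_left _ _)
          have h2 : s n ≤ M' * (a n)⁻¹ := by
            rw [mul_comm, ← div_eq_inv_mul, le_div_iff₀ (ha n)]
            nlinarith
          linarith
        · rw [Set.indicator_of_mem hnD, Set.indicator_of_mem (show n ∈ D ∩ Aᶜ from ⟨hnD, hnA⟩),
            Set.indicator_of_mem hnD]
          have : (0:ℝ) ≤ M' * (a n)⁻¹ := le_of_lt (mul_pos hM'pos (inv_pos.mpr (ha n)))
          linarith
      · rw [Set.indicator_of_notMem hnD, Set.indicator_of_notMem hnD]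
        have h1 : (0:ℝ) ≤ Set.indicator (D ∩ Aᶜ) s n :=
          Set.indicator_nonneg (fun k _ => (hs k).1) n
        simp; linarith
    have hsum1 : Summable (Set.indicator (D ∩ Aᶜ) s) := by
      refine Summable.of_nonneg_of_le (fun n => Set.indicator_nonneg (fun k _ => (hs k).1) n)
        (fun n => ?_) hAc
      by_cases hn : n ∈ D ∩ Aᶜ
      · rw [Set.indicator_of_mem hn, Set.indicator_of_mem hn.2]
      · rw [Set.indicator_of_notMem hn]
        exact Set.indicator_nonneg (fun k _ => (hs k).1) n
    have hsum2 : Summable (fun n => Set.indicator (D ∩ Aᶜ) s n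
        + M' * Set.indicator D (fun k => (a k)⁻¹) n) := hsum1.add (hsum.mul_left M')
    exact hD (Summable.of_nonneg_of_le
      (fun n => Set.indicator_nonneg (fun k _ => (hs k).1) n) key hsum2)
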